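/- Intersection construction from GDDs: let (G,β) be a group divisible design of order v with r blocks of size 5, s blocks of size 6, and p groups each of size ≡ 0 or 2 (mod 5). If a_j ∈ I_G(10) for 1 ≤ j ≤ r, c_j ∈ I_G(12) for 1 ≤ j ≤ s, and d_i ∈ I_D(2|g_i|+1) for each group g_i, then there exist two 2-(2v+1,5,1) directed designs intersecting in exactly Σ a_j + Σ c_j + Σ d_i blocks. -/

import Mathlib

/-- An ordered pair `(x,y)` is covered by an ordered 5-tuple `b` if `x` occurs before `y`. -/
def coversPair {n : ℕ} (b : Fin 5 → Fin n) (x y : Fin n) : Prop :=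
  ∃ i j : Fin 5, i < j ∧ b i = x ∧ b j = y

instance {n : ℕ} (b : Fin 5 → Fin n) (x y : Fin n) : Decidable (coversPair b x y) := by
  unfold coversPair; infer_instance

/-- A 2-(n,5,1) directed design: blocks are injective 5-tuples and every ordered pair of
distinct points is covered by exactly one block. -/
def IsDD (n : ℕ) (D : Finset (Fin 5 → Fin n)) : Prop :=
  (∀ b ∈ D, Function.Injective b) ∧
  ∀ x y : Fin n, x ≠ y → (D.filter (fun b => coversPair b x y)).card = 1

/-- Two points lie in a common group. -/
def sameGroup {n : ℕ} (groups : Finset (Finset (Fin n))) (x y : Fin n) : Prop :=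
  ∃ g ∈ groups, x ∈ g ∧ y ∈ g

/-- `groups` partitions the point set. -/
def IsGroupPartition (n : ℕ) (groups : Finset (Finset (Fin n))) : Prop :=
  ∀ x : Fin n, ∃! g, g ∈ groups ∧ x ∈ g

/-- A 5-DGDD: every ordered pair of points from different groups is covered by exactly
one block, and no pair of points from a common group is covered by any block. -/
def IsDGDD (n : ℕ) (groups : Finset (Finset (Fin n))) (D : Finset (Fin 5 → Fin n)) : Prop :=
  (∀ b ∈ D, Function.Injective b) ∧
  (∀ x y : Fin n, x ≠ y → sameGroup groups x y →
    (D.filter (fun b => coversPair b x y)).card = 0) ∧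
  (∀ x y : Fin n, x ≠ y → ¬ sameGroup groups x y →
    (D.filter (fun b => coversPair b x y)).card = 1)

/-- A group divisible design with block sizes in {5,6}: every pair of distinct points
lies in exactly one block or one group but not both. -/
def IsGDD (n : ℕ) (groups : Finset (Finset (Fin n))) (B : Finset (Finset (Fin n))) : Prop :=
  IsGroupPartition n groups ∧
  (∀ b ∈ B, b.card = 5 ∨ b.card = 6) ∧
  (∀ x y : Fin n, x ≠ y → sameGroup groups x y →
    (B.filter (fun b => x ∈ b ∧ y ∈ b)).card = 0) ∧
  (∀ x y : Fin n, x ≠ y → ¬ sameGroup groups x y →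
    (B.filter (fun b => x ∈ b ∧ y ∈ b)).card = 1)

/-- The intersection spectrum of 2-(n,5,1) directed designs. -/
def IDset (n : ℕ) : Set ℕ :=
  {m | ∃ D1 D2 : Finset (Fin 5 → Fin n), IsDD n D1 ∧ IsDD n D2 ∧ (D1 ∩ D2).card = m}

/-- The intersection spectrum of 5-DGDDs of type 2^(n/2) with the same groups. -/
def IGset (n : ℕ) : Set ℕ :=
  {m | ∃ (groups : Finset (Finset (Fin n))) (D1 D2 : Finset (Fin 5 → Fin n)),
    IsGroupPartition n groups ∧ (∀ g ∈ groups, g.card = 2) ∧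
    IsDGDD n groups D1 ∧ IsDGDD n groups D2 ∧ (D1 ∩ D2).card = m}

open Finset

/-- Count of blocks of `D` covering the ordered pair `(x,y)`. -/
def cnt {M : ℕ} (D : Finset (Fin 5 → Fin M)) (x y : Fin M) : ℕ :=
  (D.filter (fun t => coversPair t x y)).card

lemma covers_comp {N M : ℕ} {e : Fin N → Fin M} (he : Function.Injective e)
    (t : Fin 5 → Fin N) (x y : Fin N) :
    coversPair (e ∘ t) (e x) (e y) ↔ coversPair t x y := by
  constructor
  · rintro ⟨i, j, hij, hi, hj⟩
    exact ⟨i, j, hij, he hi, he hj⟩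
  · rintro ⟨i, j, hij, hi, hj⟩
    exact ⟨i, j, hij, by simp [Function.comp, hi], by simp [Function.comp, hj]⟩

lemma comp_inj {N M : ℕ} {e : Fin N → Fin M} (he : Function.Injective e) :
    Function.Injective (fun t : Fin 5 → Fin N => e ∘ t) := by
  intro t1 t2 h
  funext i
  exact he (congrFun h i)

lemma cnt_image_eq {N M : ℕ} {e : Fin N → Fin M} (he : Function.Injective e)
    (D : Finset (Fin 5 → Fin N)) (x y : Fin N) :
    cnt (D.image (fun t => e ∘ t)) (e x) (e y) = cnt D x y := by
  classical
  unfold cnt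
  have himg : (D.filter (fun t => coversPair t x y)).image (fun t => e ∘ t)
      = (D.image (fun t => e ∘ t)).filter (fun t => coversPair t (e x) (e y)) := by
    ext t
    simp only [mem_image, mem_filter]
    constructor
    · rintro ⟨t0, ⟨ht0, hc⟩, rfl⟩
      exact ⟨⟨t0, ht0, rfl⟩, (covers_comp he t0 x y).2 hc⟩
    · rintro ⟨⟨t0, ht0, rfl⟩, hc⟩
      exact ⟨t0, ⟨ht0, (covers_comp he t0 x y).1 hc⟩, rfl⟩
  rw [← himg, card_image_of_injective _ (comp_inj he)]

lemma cnt_zero_out {N M : ℕ} (e : Fin N → Fin M)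
    (D : Finset (Fin 5 → Fin N)) (x y : Fin M)
    (h : (∀ z, e z ≠ x) ∨ (∀ z, e z ≠ y)) :
    cnt (D.image (fun t => e ∘ t)) x y = 0 := by
  unfold cnt
  rw [card_eq_zero, filter_eq_empty_iff]
  rintro t ht ⟨i, j, hij, hi, hj⟩
  rw [mem_image] at ht
  obtain ⟨t0, _, rfl⟩ := ht
  rcases h with h | h
  · exact h (t0 i) hi
  · exact h (t0 j) hj

lemma cnt_self {M : ℕ} (D : Finset (Fin 5 → Fin M))
    (hD : ∀ t ∈ D, Function.Injective t) (x : Fin M) :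
    cnt D x x = 0 := by
  unfold cnt
  rw [card_eq_zero, filter_eq_empty_iff]
  rintro t ht ⟨i, j, hij, hi, hj⟩
  exact (ne_of_lt hij) (hD t ht (hi.trans hj.symm))

lemma pigeon {v : ℕ} (t : Fin 5 → Fin (2*v+1)) (ht : Function.Injective t) :
    ∃ i j : Fin 5, (t i).val / 2 ≠ (t j).val / 2 := by
  by_contra h
  push_neg at h
  have h01 : (t 0).val ≠ (t 1).val := fun hh => (by decide : (0:Fin 5) ≠ 1) (ht (Fin.ext hh))
  have h02 : (t 0).val ≠ (t 2).val := fun hh => (by decide : (0:Fin 5) ≠ 2) (ht (Fin.ext hh))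
  have h12 : (t 1).val ≠ (t 2).val := fun hh => (by decide : (1:Fin 5) ≠ 2) (ht (Fin.ext hh))
  have e1 := h 0 1
  have e2 := h 0 2
  omega

lemma exists_embed {v n : ℕ} (b : Finset (Fin v)) (gs : Finset (Finset (Fin n)))
    (hpart : IsGroupPartition n gs) (h2 : ∀ g ∈ gs, g.card = 2) (hcard : 2 * b.card = n) :
    ∃ e : Fin n → Fin (2*v+1), Function.Injective e ∧
      (∀ x, (e x).val < 2*v ∧ (e x).val/2 ∈ b.image Fin.val) ∧
      (∀ x y : Fin n, sameGroup gs x y ↔ (e x).val/2 = (e y).val/2) ∧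
      (∀ z : Fin (2*v+1), z.val < 2*v → z.val/2 ∈ b.image Fin.val → ∃ x, e x = z) := by
  classical
  have hg : ∀ x : Fin n, ∃ g, g ∈ gs ∧ x ∈ g := fun x => (hpart x).exists
  choose G hGmem hGx using hg
  have hGuniq : ∀ (x : Fin n) (g : Finset (Fin n)), g ∈ gs → x ∈ g → G x = g :=
    fun x g hgm hx => ((hpart x).unique ⟨hGmem x, hGx x⟩ ⟨hgm, hx⟩)
  -- cardinality of gs
  have hsum : ∑ g ∈ gs, g.card = n := by
    have hcov : gs.biUnion id = Finset.univ := by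
      ext x
      simp only [mem_biUnion, id, mem_univ, iff_true]
      exact ⟨G x, hGmem x, hGx x⟩
    have hdisj : ∀ g1 ∈ gs, ∀ g2 ∈ gs, g1 ≠ g2 → Disjoint g1 g2 := by
      intro g1 h1 g2 hh2 hne
      rw [Finset.disjoint_left]
      intro x hx1 hx2
      exact hne ((hGuniq x g1 h1 hx1).symm.trans (hGuniq x g2 hh2 hx2))
    calc ∑ g ∈ gs, g.card = (gs.biUnion id).card := (Finset.card_biUnion hdisj).symm
    _ = n := by rw [hcov]; simp
  have hgscard : gs.card = b.card := by
    have hsc : ∑ g ∈ gs, g.card = ∑ _g ∈ gs, 2 := Finset.sum_congr rfl (fun g hgm => h2 g hgm)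
    rw [hsc, Finset.sum_const, smul_eq_mul] at hsum
    omega
  -- the matching between groups and points of b
  let F : {g // g ∈ gs} ≃ {w // w ∈ b} :=
    (gs.equivFin).trans ((finCongr hgscard).trans (b.equivFin).symm)
  let q : Fin n → {g // g ∈ gs} := fun x => ⟨G x, hGmem x⟩
  let σ : Fin n → ℕ := fun x => ((G x).filter (fun z => z < x)).card
  have hσlt : ∀ x, σ x < 2 := by
    intro x
    have h1 : (G x).filter (fun z => z < x) ⊆ (G x).erase x := by
      intro z hz
      rw [mem_filter] at hz
      exact Finset.mem_erase.2 ⟨ne_of_lt hz.2, hz.1⟩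
    have h3 : ((G x).erase x).card = 1 := by
      rw [Finset.card_erase_of_mem (hGx x), h2 _ (hGmem x)]
    have h4 := Finset.card_le_card h1
    show ((G x).filter (fun z => z < x)).card < 2
    omega
  have hFv : ∀ x, ((F (q x)).1).val < v := fun x => (F (q x)).1.isLt
  refine ⟨fun x => ⟨2 * ((F (q x)).1).val + σ x, by have := hFv x; have := hσlt x; omega⟩,
    ?_, ?_, ?_, ?_⟩
  -- injectivity
  · intro x y hxy
    have hval : 2 * ((F (q x)).1).val + σ x = 2 * ((F (q y)).1).val + σ y :=
      congrArg Fin.val hxy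
    have hq : q x = q y := by
      have h1 : ((F (q x)).1).val = ((F (q y)).1).val := by have := hσlt x; have := hσlt y; omega
      exact F.injective (Subtype.ext (Fin.ext h1))
    have hG : G x = G y := congrArg Subtype.val hq
    have hσxy : σ x = σ y := by have := hσlt x; have := hσlt y; omega
    -- x and y lie in the same 2-element group with the same position
    obtain ⟨u, w, huw, hge⟩ := Finset.card_eq_two.mp (h2 _ (hGmem x))
    have hyG : y ∈ G x := by rw [hG]; exact hGx y
    have hxG : x ∈ G x := hGx x
    have hσy : σ y = ((G x).filter (fun z => z < y)).card := by
      show ((G y).filter _).card = _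
      rw [← hG]
    rw [hσy] at hσxy
    have hσx : σ x = ((G x).filter (fun z => z < x)).card := rfl
    rw [hσx] at hσxy
    rcases lt_trichotomy u w with hlt | heq | hlt
    · have key : ∀ z : Fin n, z ∈ G x → ((G x).filter (fun z' => z' < z)).card
          = (if z = u then 0 else 1) := by
        intro z hz
        rw [hge] at hz ⊢
        rcases Finset.mem_insert.mp hz with rfl | hz
        · rw [if_pos rfl]
          rw [Finset.card_eq_zero, filter_eq_empty_iff]
          intro z' hz'
          rcases Finset.mem_insert.mp hz' with rfl | hz'
          · exact lt_irrefl _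
          · rw [Finset.mem_singleton] at hz'
            subst hz'
            exact not_lt_of_gt hlt
        · rw [Finset.mem_singleton] at hz
          subst hz
          rw [if_neg huw.symm]
          have : ({u, z} : Finset (Fin n)).filter (fun z' => z' < z) = {u} := by
            ext z'
            simp only [Finset.mem_filter, Finset.mem_insert, Finset.mem_singleton]
            constructor
            · rintro ⟨rfl | rfl, hlt'⟩
              · rfl
              · exact absurd hlt' (lt_irrefl _)
            · rintro rfl
              exact ⟨Or.inl rfl, hlt⟩
          rw [this, Finset.card_singleton]
      have kx := key x hxG
      have ky := key y hyG
      rw [kx, ky] at hσxy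
      by_cases hxu : x = u <;> by_cases hyu : y = u
      · rw [hxu, hyu]
      · rw [if_pos hxu, if_neg hyu] at hσxy; omega
      · rw [if_neg hxu, if_pos hyu] at hσxy; omega
      · -- both are the non-u element, i.e. w
        rw [hge] at hxG hyG
        rcases Finset.mem_insert.mp hxG with rfl | hxw
        · exact absurd rfl hxu
        · rcases Finset.mem_insert.mp hyG with rfl | hyw
          · exact absurd rfl hyu
          · rw [Finset.mem_singleton] at hxw hyw
            rw [hxw, hyw]
    · exact absurd heq huw
    · -- symmetric case: w < u
      have key : ∀ z : Fin n, z ∈ G x → ((G x).filter (fun z' => z' < z)).card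
          = (if z = w then 0 else 1) := by
        intro z hz
        rw [hge] at hz ⊢
        rcases Finset.mem_insert.mp hz with rfl | hz
        · rw [if_neg huw]
          have : ({z, w} : Finset (Fin n)).filter (fun z' => z' < z) = {w} := by
            ext z'
            simp only [Finset.mem_filter, Finset.mem_insert, Finset.mem_singleton]
            constructor
            · rintro ⟨rfl | rfl, hlt'⟩
              · exact absurd hlt' (lt_irrefl _)
              · rfl
            · rintro rfl
              exact ⟨Or.inr rfl, hlt⟩
          rw [this, Finset.card_singleton]
        · rw [Finset.mem_singleton] at hz
          subst hz
          rw [if_pos rfl]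
          rw [Finset.card_eq_zero, filter_eq_empty_iff]
          intro z' hz'
          rcases Finset.mem_insert.mp hz' with rfl | hz'
          · exact not_lt_of_gt hlt
          · rw [Finset.mem_singleton] at hz'
            subst hz'
            exact lt_irrefl _
      have kx := key x hxG
      have ky := key y hyG
      rw [kx, ky] at hσxy
      by_cases hxu : x = w <;> by_cases hyu : y = w
      · rw [hxu, hyu]
      · rw [if_pos hxu, if_neg hyu] at hσxy; omega
      · rw [if_neg hxu, if_pos hyu] at hσxy; omega
      · rw [hge] at hxG hyG
        rcases Finset.mem_insert.mp hxG with rfl | hxw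
        · rcases Finset.mem_insert.mp hyG with rfl | hyw
          · rfl
          · rw [Finset.mem_singleton] at hyw
            exact absurd hyw hyu
        · rw [Finset.mem_singleton] at hxw
          exact absurd hxw hxu
  -- range
  · intro x
    constructor
    · have := hFv x; have := hσlt x
      show 2 * ((F (q x)).1).val + σ x < 2*v
      omega
    · have hdiv : (2 * ((F (q x)).1).val + σ x) / 2 = ((F (q x)).1).val := by
        have := hσlt x; omega
      show (2 * ((F (q x)).1).val + σ x) / 2 ∈ b.image Fin.val
      rw [hdiv]
      exact Finset.mem_image.2 ⟨(F (q x)).1, (F (q x)).2, rfl⟩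
  -- sameGroup iff
  · intro x y
    have hdx : (2 * ((F (q x)).1).val + σ x) / 2 = ((F (q x)).1).val := by
      have := hσlt x; omega
    have hdy : (2 * ((F (q y)).1).val + σ y) / 2 = ((F (q y)).1).val := by
      have := hσlt y; omega
    show sameGroup gs x y ↔ (2 * ((F (q x)).1).val + σ x) / 2 = (2 * ((F (q y)).1).val + σ y) / 2
    rw [hdx, hdy]
    constructor
    · rintro ⟨g, hgm, hx, hy⟩
      have h1 : G x = g := hGuniq x g hgm hx
      have h2' : G y = g := hGuniq y g hgm hy
      have : q x = q y := Subtype.ext (h1.trans h2'.symm)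
      rw [this]
    · intro h
      have hq : q x = q y := F.injective (Subtype.ext (Fin.ext h))
      have hG : G x = G y := congrArg Subtype.val hq
      exact ⟨G x, hGmem x, hGx x, by rw [hG]; exact hGx y⟩
  -- surjectivity
  · intro z hz1 hz2
    obtain ⟨w0, hw0b, hw0v⟩ := Finset.mem_image.mp hz2
    set g' : {g // g ∈ gs} := F.symm ⟨w0, hw0b⟩ with hg'def
    obtain ⟨u, w, huw, hge⟩ := Finset.card_eq_two.mp (h2 _ g'.2)
    -- pick the element of g'.1 in position z.val % 2
    have main : ∀ x : Fin n, x ∈ g'.1 → σ x = z.val % 2 →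
        (⟨2 * ((F (q x)).1).val + σ x, by have := hFv x; have := hσlt x; omega⟩ : Fin (2*v+1)) = z := by
      intro x hx hσx
      have hqx : q x = g' := Subtype.ext (hGuniq x g'.1 g'.2 hx)
      apply Fin.ext
      show 2 * ((F (q x)).1).val + σ x = z.val
      rw [hqx, hg'def, Equiv.apply_symm_apply, hσx]
      show 2 * w0.val + z.val % 2 = z.val
      omega
    rcases lt_trichotomy u w with hlt | heq | hlt
    · by_cases hmod : z.val % 2 = 0
      · refine ⟨u, main u (by rw [hge]; exact Finset.mem_insert_self u _) ?_⟩
        show ((G u).filter (fun z' => z' < u)).card = z.val % 2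
        rw [hGuniq u g'.1 g'.2 (by rw [hge]; exact Finset.mem_insert_self u _), hge, hmod]
        rw [Finset.card_eq_zero, filter_eq_empty_iff]
        intro z' hz'
        rcases Finset.mem_insert.mp hz' with rfl | hz'
        · exact lt_irrefl _
        · rw [Finset.mem_singleton] at hz'; subst hz'; exact not_lt_of_gt hlt
      · refine ⟨w, main w (by rw [hge]; exact Finset.mem_insert.2 (Or.inr (Finset.mem_singleton_self w))) ?_⟩
        show ((G w).filter (fun z' => z' < w)).card = z.val % 2
        rw [hGuniq w g'.1 g'.2 (by rw [hge]; exact Finset.mem_insert.2 (Or.inr (Finset.mem_singleton_self w))), hge]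
        have hf : ({u, w} : Finset (Fin n)).filter (fun z' => z' < w) = {u} := by
          ext z'
          simp only [Finset.mem_filter, Finset.mem_insert, Finset.mem_singleton]
          constructor
          · rintro ⟨rfl | rfl, hlt'⟩
            · rfl
            · exact absurd hlt' (lt_irrefl _)
          · rintro rfl
            exact ⟨Or.inl rfl, hlt⟩
        rw [hf, Finset.card_singleton]
        omega
    · exact absurd heq huw
    · by_cases hmod : z.val % 2 = 0
      · refine ⟨w, main w (by rw [hge]; exact Finset.mem_insert.2 (Or.inr (Finset.mem_singleton_self w))) ?_⟩
        show ((G w).filter (fun z' => z' < w)).card = z.val % 2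
        rw [hGuniq w g'.1 g'.2 (by rw [hge]; exact Finset.mem_insert.2 (Or.inr (Finset.mem_singleton_self w))), hge, hmod]
        rw [Finset.card_eq_zero, filter_eq_empty_iff]
        intro z' hz'
        rcases Finset.mem_insert.mp hz' with rfl | hz'
        · exact not_lt_of_gt hlt
        · rw [Finset.mem_singleton] at hz'; subst hz'; exact lt_irrefl _
      · refine ⟨u, main u (by rw [hge]; exact Finset.mem_insert_self u _) ?_⟩
        show ((G u).filter (fun z' => z' < u)).card = z.val % 2
        rw [hGuniq u g'.1 g'.2 (by rw [hge]; exact Finset.mem_insert_self u _), hge]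
        have hf : ({u, w} : Finset (Fin n)).filter (fun z' => z' < u) = {w} := by
          ext z'
          simp only [Finset.mem_filter, Finset.mem_insert, Finset.mem_singleton]
          constructor
          · rintro ⟨rfl | rfl, hlt'⟩
            · exact absurd hlt' (lt_irrefl _)
            · rfl
          · rintro rfl
            exact ⟨Or.inr rfl, hlt⟩
        rw [hf, Finset.card_singleton]
        omega

lemma exists_embed_group {v : ℕ} (g : Finset (Fin v)) :
    ∃ e : Fin (2*g.card+1) → Fin (2*v+1), Function.Injective e ∧
      (∀ x, (e x).val/2 ∈ g.image Fin.val ∨ (e x).val/2 = v) ∧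
      (∀ z : Fin (2*v+1), (z.val/2 ∈ g.image Fin.val ∨ z.val/2 = v) → ∃ x, e x = z) := by
  classical
  let E : {w // w ∈ g} ≃ Fin g.card := g.equivFin
  have hEv : ∀ k : Fin g.card, ((E.symm k).1).val < v := fun k => (E.symm k).1.isLt
  refine ⟨fun x => if h : x.val < 2*g.card
      then ⟨2 * ((E.symm ⟨x.val/2, by omega⟩).1).val + x.val % 2,
            by have := hEv ⟨x.val/2, by omega⟩; omega⟩
      else ⟨2*v, by omega⟩, ?_, ?_, ?_⟩
  · intro x y hxy
    by_cases hx : x.val < 2*g.card <;> by_cases hy : y.val < 2*g.card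
    · simp only [dif_pos hx, dif_pos hy] at hxy
      have hval : 2 * ((E.symm ⟨x.val/2, by omega⟩).1).val + x.val % 2
          = 2 * ((E.symm ⟨y.val/2, by omega⟩).1).val + y.val % 2 := congrArg Fin.val hxy
      have h1 : ((E.symm ⟨x.val/2, by omega⟩).1).val = ((E.symm ⟨y.val/2, by omega⟩).1).val := by
        omega
      have h2 : (⟨x.val/2, by omega⟩ : Fin g.card) = ⟨y.val/2, by omega⟩ :=
        E.symm.injective (Subtype.ext (Fin.ext h1))
      have h3 : x.val/2 = y.val/2 := congrArg Fin.val h2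
      apply Fin.ext
      omega
    · simp only [dif_pos hx, dif_neg hy] at hxy
      have hval := congrArg Fin.val hxy
      have := hEv ⟨x.val/2, by omega⟩
      simp only at hval
      omega
    · simp only [dif_neg hx, dif_pos hy] at hxy
      have hval := congrArg Fin.val hxy
      have := hEv ⟨y.val/2, by omega⟩
      simp only at hval
      omega
    · apply Fin.ext
      have hx' := x.isLt
      have hy' := y.isLt
      omega
  · intro x
    by_cases hx : x.val < 2*g.card
    · simp only [dif_pos hx]
      left
      have hd : (2 * ((E.symm ⟨x.val/2, by omega⟩).1).val + x.val % 2) / 2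
          = ((E.symm ⟨x.val/2, by omega⟩).1).val := by omega
      show (2 * ((E.symm ⟨x.val/2, by omega⟩).1).val + x.val % 2) / 2 ∈ g.image Fin.val
      rw [hd]
      exact Finset.mem_image.2 ⟨(E.symm ⟨x.val/2, by omega⟩).1, (E.symm ⟨x.val/2, by omega⟩).2, rfl⟩
    · simp only [dif_neg hx]
      right
      show (2*v)/2 = v
      omega
  · intro z hz
    rcases hz with hz | hz
    · obtain ⟨w0, hw0g, hw0v⟩ := Finset.mem_image.mp hz
      have hw0lt : w0.val < v := w0.isLt
      have hzlt : z.val < 2*v := by have := z.isLt; omega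
      set k : Fin g.card := E ⟨w0, hw0g⟩ with hk
      have hklt : k.val < g.card := k.isLt
      refine ⟨⟨2 * k.val + z.val % 2, by omega⟩, ?_⟩
      have hcond : (2 * k.val + z.val % 2) < 2*g.card := by omega
      simp only [dif_pos hcond]
      have harg : (⟨(2 * k.val + z.val % 2)/2, by omega⟩ : Fin g.card) = k := by
        apply Fin.ext
        show (2 * k.val + z.val % 2)/2 = k.val
        omega
      apply Fin.ext
      show 2 * ((E.symm ⟨(2 * k.val + z.val % 2)/2, by omega⟩).1).val + (2 * k.val + z.val % 2) % 2 = z.val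
      rw [harg]
      have h5 : E.symm k = ⟨w0, hw0g⟩ := by rw [hk]; exact Equiv.symm_apply_apply E _
      have h6 : ((E.symm k).1).val = w0.val := by rw [h5]
      omega
    · have hzv : z.val = 2*v := by have := z.isLt; omega
      refine ⟨⟨2*g.card, by omega⟩, ?_⟩
      simp only [dif_neg (show ¬(2*g.card < 2*g.card) by omega)]
      apply Fin.ext
      exact hzv.symm

lemma block_iface {v n : ℕ} {b : Finset (Fin v)} {gs : Finset (Finset (Fin n))}
    {e : Fin n → Fin (2*v+1)} (he : Function.Injective e)
    (hrange : ∀ x, (e x).val < 2*v ∧ (e x).val/2 ∈ b.image Fin.val)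
    (hsg : ∀ x y : Fin n, sameGroup gs x y ↔ (e x).val/2 = (e y).val/2)
    (hsurj : ∀ z : Fin (2*v+1), z.val < 2*v → z.val/2 ∈ b.image Fin.val → ∃ x, e x = z)
    {D : Finset (Fin 5 → Fin n)} (hD : IsDGDD n gs D) :
    (∀ t ∈ D.image (fun t => e ∘ t), Function.Injective t ∧
        ∀ i, (t i).val < 2*v ∧ (t i).val/2 ∈ b.image Fin.val) ∧
    (∀ x y : Fin (2*v+1),
      ¬(x ≠ y ∧ x.val < 2*v ∧ y.val < 2*v ∧ x.val/2 ∈ b.image Fin.val ∧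
        y.val/2 ∈ b.image Fin.val ∧ x.val/2 ≠ y.val/2) →
      cnt (D.image (fun t => e ∘ t)) x y = 0) ∧
    (∀ x y : Fin (2*v+1), x.val < 2*v → y.val < 2*v → x.val/2 ∈ b.image Fin.val →
      y.val/2 ∈ b.image Fin.val → x.val/2 ≠ y.val/2 →
      cnt (D.image (fun t => e ∘ t)) x y = 1) := by
  have hinj : ∀ t ∈ D.image (fun t => e ∘ t), Function.Injective t := by
    intro t ht
    obtain ⟨t0, ht0, rfl⟩ := Finset.mem_image.mp ht
    exact he.comp (hD.1 t0 ht0)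
  refine ⟨?_, ?_, ?_⟩
  · intro t ht
    refine ⟨hinj t ht, ?_⟩
    obtain ⟨t0, ht0, rfl⟩ := Finset.mem_image.mp ht
    intro i
    exact hrange (t0 i)
  · intro x y hcond
    by_cases hxy : x = y
    · subst hxy; exact cnt_self _ hinj x
    by_cases hxlt : x.val < 2*v
    case neg =>
      exact cnt_zero_out e D x y (Or.inl (fun z hz => hxlt (hz ▸ (hrange z).1)))
    by_cases hylt : y.val < 2*v
    case neg =>
      exact cnt_zero_out e D x y (Or.inr (fun z hz => hylt (hz ▸ (hrange z).1)))
    by_cases hxb : x.val/2 ∈ b.image Fin.val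
    case neg =>
      exact cnt_zero_out e D x y (Or.inl (fun z hz => hxb (hz ▸ (hrange z).2)))
    by_cases hyb : y.val/2 ∈ b.image Fin.val
    case neg =>
      exact cnt_zero_out e D x y (Or.inr (fun z hz => hyb (hz ▸ (hrange z).2)))
    have hdiv : x.val/2 = y.val/2 := by
      by_contra hne
      exact hcond ⟨hxy, hxlt, hylt, hxb, hyb, hne⟩
    obtain ⟨x', rfl⟩ := hsurj x hxlt hxb
    obtain ⟨y', rfl⟩ := hsurj y hylt hyb
    have hx'y' : x' ≠ y' := fun h => hxy (congrArg e h)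
    rw [cnt_image_eq he]
    exact hD.2.1 x' y' hx'y' ((hsg x' y').2 hdiv)
  · intro x y hxlt hylt hxb hyb hdiv
    obtain ⟨x', rfl⟩ := hsurj x hxlt hxb
    obtain ⟨y', rfl⟩ := hsurj y hylt hyb
    have hx'y' : x' ≠ y' := fun h => hdiv (congrArg (fun z => (e z).val/2) h)
    rw [cnt_image_eq he]
    exact hD.2.2 x' y' hx'y' (fun hsame => hdiv ((hsg x' y').1 hsame))

lemma group_iface {v m : ℕ} {g : Finset (Fin v)}
    {e : Fin (2*m+1) → Fin (2*v+1)} (he : Function.Injective e)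
    (hrange : ∀ x, (e x).val/2 ∈ g.image Fin.val ∨ (e x).val/2 = v)
    (hsurj : ∀ z : Fin (2*v+1), (z.val/2 ∈ g.image Fin.val ∨ z.val/2 = v) → ∃ x, e x = z)
    {D : Finset (Fin 5 → Fin (2*m+1))} (hD : IsDD (2*m+1) D) :
    (∀ t ∈ D.image (fun t => e ∘ t), Function.Injective t ∧
        ∀ i, ((t i).val/2 ∈ g.image Fin.val ∨ (t i).val/2 = v)) ∧
    (∀ x y : Fin (2*v+1),
      ¬((x.val/2 ∈ g.image Fin.val ∨ x.val/2 = v) ∧ (y.val/2 ∈ g.image Fin.val ∨ y.val/2 = v)) →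
      cnt (D.image (fun t => e ∘ t)) x y = 0) ∧
    (∀ x y : Fin (2*v+1), x ≠ y → (x.val/2 ∈ g.image Fin.val ∨ x.val/2 = v) →
      (y.val/2 ∈ g.image Fin.val ∨ y.val/2 = v) →
      cnt (D.image (fun t => e ∘ t)) x y = 1) := by
  refine ⟨?_, ?_, ?_⟩
  · intro t ht
    obtain ⟨t0, ht0, rfl⟩ := Finset.mem_image.mp ht
    exact ⟨he.comp (hD.1 t0 ht0), fun i => hrange (t0 i)⟩
  · intro x y hcond
    by_cases hx : x.val/2 ∈ g.image Fin.val ∨ x.val/2 = v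
    · have hy : ¬(y.val/2 ∈ g.image Fin.val ∨ y.val/2 = v) := fun hy => hcond ⟨hx, hy⟩
      exact cnt_zero_out e D x y (Or.inr (fun z hz => hy (hz ▸ hrange z)))
    · exact cnt_zero_out e D x y (Or.inl (fun z hz => hx (hz ▸ hrange z)))
  · intro x y hxy hx hy
    obtain ⟨x', rfl⟩ := hsurj x hx
    obtain ⟨y', rfl⟩ := hsurj y hy
    rw [cnt_image_eq he]
    exact hD.2 x' y' (fun h => hxy (congrArg e h))

theorem intersection_construction_from_GDD (v : ℕ)
    (groups B : Finset (Finset (Fin v)))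
    (hGDD : IsGDD v groups B)
    (hsizes : ∀ g ∈ groups, g.card % 5 = 0 ∨ g.card % 5 = 2)
    (a c d : Finset (Fin v) → ℕ)
    (ha : ∀ b ∈ B, b.card = 5 → a b ∈ IGset 10)
    (hc : ∀ b ∈ B, b.card = 6 → c b ∈ IGset 12)
    (hd : ∀ g ∈ groups, d g ∈ IDset (2 * g.card + 1)) :
    ∃ D1 D2 : Finset (Fin 5 → Fin (2 * v + 1)),
      IsDD (2 * v + 1) D1 ∧ IsDD (2 * v + 1) D2 ∧
      (D1 ∩ D2).card =
        (B.filter (fun b => b.card = 5)).sum a +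
        (B.filter (fun b => b.card = 6)).sum c +
        groups.sum d := by
  classical
  obtain ⟨hpart, hbsize, hsame, hdiff⟩ := hGDD
  -- per-block transported designs
  have hblocks : ∀ b : Finset (Fin v), ∃ T1 T2 : Finset (Fin 5 → Fin (2*v+1)),
      b ∈ B →
      ((∀ t ∈ T1 ∪ T2, Function.Injective t ∧
          ∀ i, (t i).val < 2*v ∧ (t i).val/2 ∈ b.image Fin.val) ∧
       (∀ x y : Fin (2*v+1),
          ¬(x ≠ y ∧ x.val < 2*v ∧ y.val < 2*v ∧ x.val/2 ∈ b.image Fin.val ∧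
            y.val/2 ∈ b.image Fin.val ∧ x.val/2 ≠ y.val/2) →
          cnt T1 x y = 0 ∧ cnt T2 x y = 0) ∧
       (∀ x y : Fin (2*v+1), x.val < 2*v → y.val < 2*v → x.val/2 ∈ b.image Fin.val →
          y.val/2 ∈ b.image Fin.val → x.val/2 ≠ y.val/2 →
          cnt T1 x y = 1 ∧ cnt T2 x y = 1) ∧
       (T1 ∩ T2).card = (if b.card = 5 then a b else c b)) := by
    intro b
    by_cases hb : b ∈ B
    · rcases hbsize b hb with h5 | h6
      · obtain ⟨gs, d1, d2, hp, h2, hd1, hd2, hint⟩ := ha b hb h5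
        obtain ⟨e, he, hrange, hsg, hs⟩ := exists_embed b gs hp h2 (by omega)
        refine ⟨d1.image (fun t => e ∘ t), d2.image (fun t => e ∘ t), fun _ => ?_⟩
        obtain ⟨hA1, hB1, hC1⟩ := block_iface he hrange hsg hs hd1
        obtain ⟨hA2, hB2, hC2⟩ := block_iface he hrange hsg hs hd2
        refine ⟨?_, fun x y hcond => ⟨hB1 x y hcond, hB2 x y hcond⟩,
          fun x y u1 u2 u3 u4 u5 => ⟨hC1 x y u1 u2 u3 u4 u5, hC2 x y u1 u2 u3 u4 u5⟩, ?_⟩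
        · intro t ht
          rcases Finset.mem_union.mp ht with ht | ht
          exacts [hA1 t ht, hA2 t ht]
        · rw [if_pos h5, ← Finset.image_inter _ _ (comp_inj he),
            Finset.card_image_of_injective _ (comp_inj he)]
          exact hint
      · obtain ⟨gs, d1, d2, hp, h2, hd1, hd2, hint⟩ := hc b hb h6
        obtain ⟨e, he, hrange, hsg, hs⟩ := exists_embed b gs hp h2 (by omega)
        refine ⟨d1.image (fun t => e ∘ t), d2.image (fun t => e ∘ t), fun _ => ?_⟩
        obtain ⟨hA1, hB1, hC1⟩ := block_iface he hrange hsg hs hd1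
        obtain ⟨hA2, hB2, hC2⟩ := block_iface he hrange hsg hs hd2
        refine ⟨?_, fun x y hcond => ⟨hB1 x y hcond, hB2 x y hcond⟩,
          fun x y u1 u2 u3 u4 u5 => ⟨hC1 x y u1 u2 u3 u4 u5, hC2 x y u1 u2 u3 u4 u5⟩, ?_⟩
        · intro t ht
          rcases Finset.mem_union.mp ht with ht | ht
          exacts [hA1 t ht, hA2 t ht]
        · rw [if_neg (by omega), ← Finset.image_inter _ _ (comp_inj he),
            Finset.card_image_of_injective _ (comp_inj he)]
          exact hint
    · exact ⟨∅, ∅, fun h => absurd h hb⟩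
  choose Tb1 Tb2 hTb using hblocks
  -- per-group transported designs
  have hgroups' : ∀ g : Finset (Fin v), ∃ T1 T2 : Finset (Fin 5 → Fin (2*v+1)),
      g ∈ groups →
      ((∀ t ∈ T1 ∪ T2, Function.Injective t ∧
          ∀ i, ((t i).val/2 ∈ g.image Fin.val ∨ (t i).val/2 = v)) ∧
       (∀ x y : Fin (2*v+1),
          ¬((x.val/2 ∈ g.image Fin.val ∨ x.val/2 = v) ∧
            (y.val/2 ∈ g.image Fin.val ∨ y.val/2 = v)) →
          cnt T1 x y = 0 ∧ cnt T2 x y = 0) ∧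
       (∀ x y : Fin (2*v+1), x ≠ y → (x.val/2 ∈ g.image Fin.val ∨ x.val/2 = v) →
          (y.val/2 ∈ g.image Fin.val ∨ y.val/2 = v) →
          cnt T1 x y = 1 ∧ cnt T2 x y = 1) ∧
       (T1 ∩ T2).card = d g) := by
    intro g
    by_cases hg : g ∈ groups
    · obtain ⟨d1, d2, hd1, hd2, hint⟩ := hd g hg
      obtain ⟨e, he, hrange, hs⟩ := exists_embed_group g
      refine ⟨d1.image (fun t => e ∘ t), d2.image (fun t => e ∘ t), fun _ => ?_⟩
      obtain ⟨hA1, hB1, hC1⟩ := group_iface he hrange hs hd1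
      obtain ⟨hA2, hB2, hC2⟩ := group_iface he hrange hs hd2
      refine ⟨?_, fun x y hcond => ⟨hB1 x y hcond, hB2 x y hcond⟩,
        fun x y u1 u2 u3 => ⟨hC1 x y u1 u2 u3, hC2 x y u1 u2 u3⟩, ?_⟩
      · intro t ht
        rcases Finset.mem_union.mp ht with ht | ht
        exacts [hA1 t ht, hA2 t ht]
      · rw [← Finset.image_inter _ _ (comp_inj he),
          Finset.card_image_of_injective _ (comp_inj he)]
        exact hint
    · exact ⟨∅, ∅, fun h => absurd h hg⟩
  choose Tg1 Tg2 hTg using hgroups'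
  -- disjointness helpers
  have hBB : ∀ b ∈ B, ∀ b' ∈ B, ∀ t : Fin 5 → Fin (2*v+1), Function.Injective t →
      (∀ i, (t i).val < 2*v ∧ (t i).val/2 ∈ b.image Fin.val) →
      (∀ i, (t i).val < 2*v ∧ (t i).val/2 ∈ b'.image Fin.val) → b = b' := by
    intro b hb b' hb' t ht h1 h2
    obtain ⟨i, j, hij⟩ := pigeon t ht
    obtain ⟨p, hpb, hpv⟩ := Finset.mem_image.mp (h1 i).2
    obtain ⟨q, hqb, hqv⟩ := Finset.mem_image.mp (h1 j).2
    obtain ⟨p', hpb', hpv'⟩ := Finset.mem_image.mp (h2 i).2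
    obtain ⟨q', hqb', hqv'⟩ := Finset.mem_image.mp (h2 j).2
    have hpp : p' = p := Fin.ext (hpv'.trans hpv.symm)
    have hqq : q' = q := Fin.ext (hqv'.trans hqv.symm)
    subst hpp
    subst hqq
    have hpq : p' ≠ q' := by
      intro h
      apply hij
      rw [← hpv', ← hqv']
      exact congrArg Fin.val h
    have hnot : ¬ sameGroup groups p' q' := by
      intro hsg
      have h0 := hsame p' q' hpq hsg
      rw [Finset.card_eq_zero] at h0
      have hmem : b ∈ B.filter (fun s => p' ∈ s ∧ q' ∈ s) :=
        Finset.mem_filter.2 ⟨hb, hpb, hqb⟩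
      rw [h0] at hmem
      exact absurd hmem (Finset.notMem_empty b)
    obtain ⟨b0, hb0⟩ := Finset.card_eq_one.mp (hdiff p' q' hpq hnot)
    have e1 : b ∈ B.filter (fun s => p' ∈ s ∧ q' ∈ s) :=
      Finset.mem_filter.2 ⟨hb, hpb, hqb⟩
    have e2 : b' ∈ B.filter (fun s => p' ∈ s ∧ q' ∈ s) :=
      Finset.mem_filter.2 ⟨hb', hpb', hqb'⟩
    rw [hb0, Finset.mem_singleton] at e1 e2
    rw [e1, e2]
  have hBG : ∀ b ∈ B, ∀ t : Fin 5 → Fin (2*v+1), Function.Injective t →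
      (∀ i, (t i).val < 2*v ∧ (t i).val/2 ∈ b.image Fin.val) →
      ∀ g ∈ groups, ¬(∀ i, ((t i).val/2 ∈ g.image Fin.val ∨ (t i).val/2 = v)) := by
    intro b hb t ht h1 g hg h2
    obtain ⟨i, j, hij⟩ := pigeon t ht
    obtain ⟨p, hpb, hpv⟩ := Finset.mem_image.mp (h1 i).2
    obtain ⟨q, hqb, hqv⟩ := Finset.mem_image.mp (h1 j).2
    have hilt : (t i).val/2 < v := by have := (h1 i).1; omega
    have hjlt : (t j).val/2 < v := by have := (h1 j).1; omega
    have hgi : (t i).val/2 ∈ g.image Fin.val := by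
      rcases h2 i with h | h
      · exact h
      · omega
    have hgj : (t j).val/2 ∈ g.image Fin.val := by
      rcases h2 j with h | h
      · exact h
      · omega
    obtain ⟨p2, hp2g, hp2v⟩ := Finset.mem_image.mp hgi
    obtain ⟨q2, hq2g, hq2v⟩ := Finset.mem_image.mp hgj
    have hpp : p2 = p := Fin.ext (hp2v.trans hpv.symm)
    have hqq : q2 = q := Fin.ext (hq2v.trans hqv.symm)
    subst hpp
    subst hqq
    have hpq : p2 ≠ q2 := by
      intro h
      apply hij
      rw [← hpv, ← hqv]
      exact congrArg Fin.val h
    have h0 := hsame p2 q2 hpq ⟨g, hg, hp2g, hq2g⟩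
    rw [Finset.card_eq_zero] at h0
    have hmem : b ∈ B.filter (fun s => p2 ∈ s ∧ q2 ∈ s) :=
      Finset.mem_filter.2 ⟨hb, hpb, hqb⟩
    rw [h0] at hmem
    exact absurd hmem (Finset.notMem_empty b)
  have hGG : ∀ g ∈ groups, ∀ g' ∈ groups, ∀ t : Fin 5 → Fin (2*v+1), Function.Injective t →
      (∀ i, ((t i).val/2 ∈ g.image Fin.val ∨ (t i).val/2 = v)) →
      (∀ i, ((t i).val/2 ∈ g'.image Fin.val ∨ (t i).val/2 = v)) → g = g' := by
    intro g hg g' hg' t ht h1 h2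
    obtain ⟨i, j, hij⟩ := pigeon t ht
    have hex : ∃ i0, (t i0).val/2 ≠ v := by
      by_cases h : (t i).val/2 = v
      · exact ⟨j, by omega⟩
      · exact ⟨i, h⟩
    obtain ⟨i0, hi0⟩ := hex
    have hgi : (t i0).val/2 ∈ g.image Fin.val := by
      rcases h1 i0 with h | h
      · exact h
      · exact absurd h hi0
    have hgi' : (t i0).val/2 ∈ g'.image Fin.val := by
      rcases h2 i0 with h | h
      · exact h
      · exact absurd h hi0
    obtain ⟨p, hpg, hpv⟩ := Finset.mem_image.mp hgi
    obtain ⟨p', hpg', hpv'⟩ := Finset.mem_image.mp hgi'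
    have hpp : p' = p := Fin.ext (hpv'.trans hpv.symm)
    subst hpp
    exact ((hpart p').unique ⟨hg, hpg⟩ ⟨hg', hpg'⟩)
  -- the master counting argument
  have main : ∀ (Tb Tg : Finset (Fin v) → Finset (Fin 5 → Fin (2*v+1))),
      (∀ b ∈ B, ∀ t ∈ Tb b, Function.Injective t ∧
          ∀ i, (t i).val < 2*v ∧ (t i).val/2 ∈ b.image Fin.val) →
      (∀ b ∈ B, ∀ x y : Fin (2*v+1),
          ¬(x ≠ y ∧ x.val < 2*v ∧ y.val < 2*v ∧ x.val/2 ∈ b.image Fin.val ∧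
            y.val/2 ∈ b.image Fin.val ∧ x.val/2 ≠ y.val/2) → cnt (Tb b) x y = 0) →
      (∀ b ∈ B, ∀ x y : Fin (2*v+1), x.val < 2*v → y.val < 2*v →
          x.val/2 ∈ b.image Fin.val → y.val/2 ∈ b.image Fin.val → x.val/2 ≠ y.val/2 →
          cnt (Tb b) x y = 1) →
      (∀ g ∈ groups, ∀ t ∈ Tg g, Function.Injective t ∧
          ∀ i, ((t i).val/2 ∈ g.image Fin.val ∨ (t i).val/2 = v)) →
      (∀ g ∈ groups, ∀ x y : Fin (2*v+1),
          ¬((x.val/2 ∈ g.image Fin.val ∨ x.val/2 = v) ∧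
            (y.val/2 ∈ g.image Fin.val ∨ y.val/2 = v)) → cnt (Tg g) x y = 0) →
      (∀ g ∈ groups, ∀ x y : Fin (2*v+1), x ≠ y →
          (x.val/2 ∈ g.image Fin.val ∨ x.val/2 = v) →
          (y.val/2 ∈ g.image Fin.val ∨ y.val/2 = v) → cnt (Tg g) x y = 1) →
      IsDD (2*v+1) (B.biUnion Tb ∪ groups.biUnion Tg) := by
    intro Tb Tg hTbP hTbZ hTbO hTgP hTgZ hTgO
    have hdisjBG : Disjoint (B.biUnion Tb) (groups.biUnion Tg) := by
      rw [Finset.disjoint_left]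
      intro t h1 h2
      obtain ⟨b, hb, htb⟩ := Finset.mem_biUnion.mp h1
      obtain ⟨g, hg, htg⟩ := Finset.mem_biUnion.mp h2
      exact hBG b hb t (hTbP b hb t htb).1 (hTbP b hb t htb).2 g hg (hTgP g hg t htg).2
    constructor
    · intro t ht
      rcases Finset.mem_union.mp ht with h | h
      · obtain ⟨b, hb, htb⟩ := Finset.mem_biUnion.mp h
        exact (hTbP b hb t htb).1
      · obtain ⟨g, hg, htg⟩ := Finset.mem_biUnion.mp h
        exact (hTgP g hg t htg).1
    intro x y hxy
    have hsplit : ((B.biUnion Tb ∪ groups.biUnion Tg).filter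
          (fun t => coversPair t x y)).card
        = ∑ b ∈ B, cnt (Tb b) x y + ∑ g ∈ groups, cnt (Tg g) x y := by
      rw [Finset.filter_union,
        Finset.card_union_of_disjoint (Finset.disjoint_filter_filter hdisjBG)]
      congr 1
      · have h1 : (B.biUnion Tb).filter (fun t => coversPair t x y)
            = B.biUnion (fun b => (Tb b).filter (fun t => coversPair t x y)) := by
          ext t
          simp only [Finset.mem_filter, Finset.mem_biUnion]
          tauto
        rw [h1, Finset.card_biUnion]
        · rfl
        intro b hb b' hb' hne
        simp only [Function.onFun]; rw [Finset.disjoint_left]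
        intro t ht1 ht2
        rw [Finset.mem_filter] at ht1 ht2
        exact hne (hBB b hb b' hb' t (hTbP b hb t ht1.1).1
          (hTbP b hb t ht1.1).2 (hTbP b' hb' t ht2.1).2)
      · have h1 : (groups.biUnion Tg).filter (fun t => coversPair t x y)
            = groups.biUnion (fun g => (Tg g).filter (fun t => coversPair t x y)) := by
          ext t
          simp only [Finset.mem_filter, Finset.mem_biUnion]
          tauto
        rw [h1, Finset.card_biUnion]
        · rfl
        intro g hg g' hg' hne
        simp only [Function.onFun]; rw [Finset.disjoint_left]
        intro t ht1 ht2
        rw [Finset.mem_filter] at ht1 ht2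
        exact hne (hGG g hg g' hg' t (hTgP g hg t ht1.1).1
          (hTgP g hg t ht1.1).2 (hTgP g' hg' t ht2.1).2)
    rw [hsplit]
    have hxlt := x.isLt
    have hylt := y.isLt
    have hvalne : x.val ≠ y.val := fun h => hxy (Fin.ext h)
    by_cases hpx : x.val/2 = y.val/2
    · -- two copies of the same point
      have hpv : x.val/2 < v := by omega
      have hsumB : ∑ b ∈ B, cnt (Tb b) x y = 0 :=
        Finset.sum_eq_zero fun b hb =>
          hTbZ b hb x y (fun hcon => hcon.2.2.2.2.2 hpx)
      obtain ⟨g0, ⟨hg0m, hg0x⟩, hg0u⟩ := hpart ⟨x.val/2, hpv⟩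
      have hsumG : ∑ g ∈ groups, cnt (Tg g) x y = 1 := by
        rw [Finset.sum_eq_single_of_mem g0 hg0m]
        · exact hTgO g0 hg0m x y hxy
            (Or.inl (Finset.mem_image.2 ⟨⟨x.val/2, hpv⟩, hg0x, rfl⟩))
            (Or.inl (Finset.mem_image.2 ⟨⟨x.val/2, hpv⟩, hg0x, hpx⟩))
        · intro g hg hne
          apply hTgZ g hg x y
          rintro ⟨hxQ, -⟩
          have hxg : x.val/2 ∈ g.image Fin.val := by
            rcases hxQ with h | h
            · exact h
            · omega
          obtain ⟨p, hpg, hpv'⟩ := Finset.mem_image.mp hxg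
          have : p = ⟨x.val/2, hpv⟩ := Fin.ext hpv'
          subst this
          exact hne (hg0u g ⟨hg, hpg⟩)
      omega
    · by_cases hxv : x.val/2 = v
      · -- x is the infinity point
        have hyv : y.val/2 < v := by omega
        have hsumB : ∑ b ∈ B, cnt (Tb b) x y = 0 :=
          Finset.sum_eq_zero fun b hb =>
            hTbZ b hb x y (fun hcon => by have := hcon.2.1; omega)
        obtain ⟨g0, ⟨hg0m, hg0x⟩, hg0u⟩ := hpart ⟨y.val/2, hyv⟩
        have hsumG : ∑ g ∈ groups, cnt (Tg g) x y = 1 := by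
          rw [Finset.sum_eq_single_of_mem g0 hg0m]
          · exact hTgO g0 hg0m x y hxy (Or.inr hxv)
              (Or.inl (Finset.mem_image.2 ⟨⟨y.val/2, hyv⟩, hg0x, rfl⟩))
          · intro g hg hne
            apply hTgZ g hg x y
            rintro ⟨-, hyQ⟩
            have hyg : y.val/2 ∈ g.image Fin.val := by
              rcases hyQ with h | h
              · exact h
              · omega
            obtain ⟨p, hpg, hpv'⟩ := Finset.mem_image.mp hyg
            have : p = ⟨y.val/2, hyv⟩ := Fin.ext hpv'
            subst this
            exact hne (hg0u g ⟨hg, hpg⟩)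
        omega
      · by_cases hyv : y.val/2 = v
        · -- y is the infinity point
          have hxv' : x.val/2 < v := by omega
          have hsumB : ∑ b ∈ B, cnt (Tb b) x y = 0 :=
            Finset.sum_eq_zero fun b hb =>
              hTbZ b hb x y (fun hcon => by have := hcon.2.2.1; omega)
          obtain ⟨g0, ⟨hg0m, hg0x⟩, hg0u⟩ := hpart ⟨x.val/2, hxv'⟩
          have hsumG : ∑ g ∈ groups, cnt (Tg g) x y = 1 := by
            rw [Finset.sum_eq_single_of_mem g0 hg0m]
            · exact hTgO g0 hg0m x y hxy
                (Or.inl (Finset.mem_image.2 ⟨⟨x.val/2, hxv'⟩, hg0x, rfl⟩))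
                (Or.inr hyv)
            · intro g hg hne
              apply hTgZ g hg x y
              rintro ⟨hxQ, -⟩
              have hxg : x.val/2 ∈ g.image Fin.val := by
                rcases hxQ with h | h
                · exact h
                · omega
              obtain ⟨p, hpg, hpv'⟩ := Finset.mem_image.mp hxg
              have : p = ⟨x.val/2, hxv'⟩ := Fin.ext hpv'
              subst this
              exact hne (hg0u g ⟨hg, hpg⟩)
          omega
        · -- two genuinely different points
          have hxv' : x.val/2 < v := by omega
          have hyv' : y.val/2 < v := by omega
          set P : Fin v := ⟨x.val/2, hxv'⟩ with hPdef
          set Q : Fin v := ⟨y.val/2, hyv'⟩ with hQdef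
          have hPQ : P ≠ Q := fun h => hpx (congrArg Fin.val h)
          have hxltv : x.val < 2*v := by omega
          have hyltv : y.val < 2*v := by omega
          by_cases hsg : sameGroup groups P Q
          · obtain ⟨gc, hgc, hPgc, hQgc⟩ := hsg
            have hsumB : ∑ b ∈ B, cnt (Tb b) x y = 0 := by
              apply Finset.sum_eq_zero
              intro b hb
              apply hTbZ b hb x y
              rintro ⟨-, -, -, hxb, hyb, -⟩
              obtain ⟨p, hpb, hpv'⟩ := Finset.mem_image.mp hxb
              obtain ⟨q, hqb, hqv'⟩ := Finset.mem_image.mp hyb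
              have hp : p = P := Fin.ext hpv'
              have hq : q = Q := Fin.ext hqv'
              subst hp
              subst hq
              have h0 := hsame P Q hPQ ⟨gc, hgc, hPgc, hQgc⟩
              rw [Finset.card_eq_zero] at h0
              have hmem : b ∈ B.filter (fun s => P ∈ s ∧ Q ∈ s) :=
                Finset.mem_filter.2 ⟨hb, hpb, hqb⟩
              rw [h0] at hmem
              exact absurd hmem (Finset.notMem_empty b)
            have hsumG : ∑ g ∈ groups, cnt (Tg g) x y = 1 := by
              rw [Finset.sum_eq_single_of_mem gc hgc]
              · exact hTgO gc hgc x y hxy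
                  (Or.inl (Finset.mem_image.2 ⟨P, hPgc, rfl⟩))
                  (Or.inl (Finset.mem_image.2 ⟨Q, hQgc, rfl⟩))
              · intro g hg hne
                apply hTgZ g hg x y
                rintro ⟨hxQ, -⟩
                have hxg : x.val/2 ∈ g.image Fin.val := by
                  rcases hxQ with h | h
                  · exact h
                  · omega
                obtain ⟨p, hpg, hpv'⟩ := Finset.mem_image.mp hxg
                have hp : p = P := Fin.ext hpv'
                subst hp
                exact hne ((hpart P).unique ⟨hg, hpg⟩ ⟨hgc, hPgc⟩)
            omega
          · obtain ⟨b0, hb0⟩ := Finset.card_eq_one.mp (hdiff P Q hPQ hsg)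
            have hb0mem : b0 ∈ B.filter (fun s => P ∈ s ∧ Q ∈ s) := by
              rw [hb0]
              exact Finset.mem_singleton_self b0
            rw [Finset.mem_filter] at hb0mem
            obtain ⟨hb0B, hPb0, hQb0⟩ := hb0mem
            have hsumB : ∑ b ∈ B, cnt (Tb b) x y = 1 := by
              rw [Finset.sum_eq_single_of_mem b0 hb0B]
              · exact hTbO b0 hb0B x y hxltv hyltv
                  (Finset.mem_image.2 ⟨P, hPb0, rfl⟩)
                  (Finset.mem_image.2 ⟨Q, hQb0, rfl⟩) hpx
              · intro b hb hne
                apply hTbZ b hb x y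
                rintro ⟨-, -, -, hxb, hyb, -⟩
                obtain ⟨p, hpb, hpv'⟩ := Finset.mem_image.mp hxb
                obtain ⟨q, hqb, hqv'⟩ := Finset.mem_image.mp hyb
                have hp : p = P := Fin.ext hpv'
                have hq : q = Q := Fin.ext hqv'
                subst hp
                subst hq
                have hmem : b ∈ B.filter (fun s => P ∈ s ∧ Q ∈ s) :=
                  Finset.mem_filter.2 ⟨hb, hpb, hqb⟩
                rw [hb0, Finset.mem_singleton] at hmem
                exact hne hmem
            have hsumG : ∑ g ∈ groups, cnt (Tg g) x y = 0 := by
              apply Finset.sum_eq_zero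
              intro g hg
              apply hTgZ g hg x y
              rintro ⟨hxQ, hyQ⟩
              have hxg : x.val/2 ∈ g.image Fin.val := by
                rcases hxQ with h | h
                · exact h
                · omega
              have hyg : y.val/2 ∈ g.image Fin.val := by
                rcases hyQ with h | h
                · exact h
                · omega
              obtain ⟨p, hpg, hpv'⟩ := Finset.mem_image.mp hxg
              obtain ⟨q, hqg, hqv'⟩ := Finset.mem_image.mp hyg
              have hp : p = P := Fin.ext hpv'
              have hq : q = Q := Fin.ext hqv'
              subst hp
              subst hq
              exact hsg ⟨g, hg, hpg, hqg⟩
            omega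
  refine ⟨B.biUnion Tb1 ∪ groups.biUnion Tg1, B.biUnion Tb2 ∪ groups.biUnion Tg2,
    main Tb1 Tg1
      (fun b hb t ht => (hTb b hb).1 t (Finset.mem_union_left _ ht))
      (fun b hb x y h => ((hTb b hb).2.1 x y h).1)
      (fun b hb x y u1 u2 u3 u4 u5 => ((hTb b hb).2.2.1 x y u1 u2 u3 u4 u5).1)
      (fun g hg t ht => (hTg g hg).1 t (Finset.mem_union_left _ ht))
      (fun g hg x y h => ((hTg g hg).2.1 x y h).1)
      (fun g hg x y u1 u2 u3 => ((hTg g hg).2.2.1 x y u1 u2 u3).1),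
    main Tb2 Tg2
      (fun b hb t ht => (hTb b hb).1 t (Finset.mem_union_right _ ht))
      (fun b hb x y h => ((hTb b hb).2.1 x y h).2)
      (fun b hb x y u1 u2 u3 u4 u5 => ((hTb b hb).2.2.1 x y u1 u2 u3 u4 u5).2)
      (fun g hg t ht => (hTg g hg).1 t (Finset.mem_union_right _ ht))
      (fun g hg x y h => ((hTg g hg).2.1 x y h).2)
      (fun g hg x y u1 u2 u3 => ((hTg g hg).2.2.1 x y u1 u2 u3).2), ?_⟩
  have hdint : (B.biUnion Tb1 ∪ groups.biUnion Tg1) ∩ (B.biUnion Tb2 ∪ groups.biUnion Tg2)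
      = (B.biUnion fun b => Tb1 b ∩ Tb2 b) ∪ (groups.biUnion fun g => Tg1 g ∩ Tg2 g) := by
    ext t
    simp only [Finset.mem_inter, Finset.mem_union, Finset.mem_biUnion]
    constructor
    · rintro ⟨h1 | h1, h2 | h2⟩
      · obtain ⟨b, hb, ht1⟩ := h1
        obtain ⟨b', hb', ht2⟩ := h2
        have hP1 := (hTb b hb).1 t (Finset.mem_union_left _ ht1)
        have hP2 := (hTb b' hb').1 t (Finset.mem_union_right _ ht2)
        have hbb : b = b' := hBB b hb b' hb' t hP1.1 hP1.2 hP2.2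
        subst hbb
        exact Or.inl ⟨b, hb, ht1, ht2⟩
      · obtain ⟨b, hb, ht1⟩ := h1
        obtain ⟨g, hg, ht2⟩ := h2
        have hP1 := (hTb b hb).1 t (Finset.mem_union_left _ ht1)
        have hP2 := (hTg g hg).1 t (Finset.mem_union_right _ ht2)
        exact absurd hP2.2 (hBG b hb t hP1.1 hP1.2 g hg)
      · obtain ⟨g, hg, ht1⟩ := h1
        obtain ⟨b, hb, ht2⟩ := h2
        have hP1 := (hTg g hg).1 t (Finset.mem_union_left _ ht1)
        have hP2 := (hTb b hb).1 t (Finset.mem_union_right _ ht2)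
        exact absurd hP1.2 (hBG b hb t hP2.1 hP2.2 g hg)
      · obtain ⟨g, hg, ht1⟩ := h1
        obtain ⟨g', hg', ht2⟩ := h2
        have hP1 := (hTg g hg).1 t (Finset.mem_union_left _ ht1)
        have hP2 := (hTg g' hg').1 t (Finset.mem_union_right _ ht2)
        have hgg : g = g' := hGG g hg g' hg' t hP1.1 hP1.2 hP2.2
        subst hgg
        exact Or.inr ⟨g, hg, ht1, ht2⟩
    · rintro (⟨b, hb, ht1, ht2⟩ | ⟨g, hg, ht1, ht2⟩)
      · exact ⟨Or.inl ⟨b, hb, ht1⟩, Or.inl ⟨b, hb, ht2⟩⟩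
      · exact ⟨Or.inr ⟨g, hg, ht1⟩, Or.inr ⟨g, hg, ht2⟩⟩
  rw [hdint]
  have hdisj : Disjoint (B.biUnion fun b => Tb1 b ∩ Tb2 b)
      (groups.biUnion fun g => Tg1 g ∩ Tg2 g) := by
    rw [Finset.disjoint_left]
    intro t h1 h2
    obtain ⟨b, hb, ht1⟩ := Finset.mem_biUnion.mp h1
    obtain ⟨g, hg, ht2⟩ := Finset.mem_biUnion.mp h2
    have hP1 := (hTb b hb).1 t (Finset.mem_union_left _ (Finset.mem_inter.mp ht1).1)
    have hP2 := (hTg g hg).1 t (Finset.mem_union_left _ (Finset.mem_inter.mp ht2).1)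
    exact (hBG b hb t hP1.1 hP1.2 g hg) hP2.2
  rw [Finset.card_union_of_disjoint hdisj]
  have hc1 : (B.biUnion fun b => Tb1 b ∩ Tb2 b).card = ∑ b ∈ B, (Tb1 b ∩ Tb2 b).card := by
    apply Finset.card_biUnion
    intro b hb b' hb' hne
    simp only [Function.onFun]; rw [Finset.disjoint_left]
    intro t ht1 ht2
    have hP1 := (hTb b hb).1 t (Finset.mem_union_left _ (Finset.mem_inter.mp ht1).1)
    have hP2 := (hTb b' hb').1 t (Finset.mem_union_left _ (Finset.mem_inter.mp ht2).1)
    exact hne (hBB b hb b' hb' t hP1.1 hP1.2 hP2.2)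
  have hc2 : (groups.biUnion fun g => Tg1 g ∩ Tg2 g).card
      = ∑ g ∈ groups, (Tg1 g ∩ Tg2 g).card := by
    apply Finset.card_biUnion
    intro g hg g' hg' hne
    simp only [Function.onFun]; rw [Finset.disjoint_left]
    intro t ht1 ht2
    have hP1 := (hTg g hg).1 t (Finset.mem_union_left _ (Finset.mem_inter.mp ht1).1)
    have hP2 := (hTg g' hg').1 t (Finset.mem_union_left _ (Finset.mem_inter.mp ht2).1)
    exact hne (hGG g hg g' hg' t hP1.1 hP1.2 hP2.2)
  rw [hc1, hc2]
  have h5sum : ∑ b ∈ B, (Tb1 b ∩ Tb2 b).card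
      = (B.filter (fun b => b.card = 5)).sum a + (B.filter (fun b => b.card = 6)).sum c := by
    rw [Finset.sum_congr rfl (fun b hb => (hTb b hb).2.2.2), Finset.sum_ite]
    congr 1
    apply Finset.sum_congr ?_ (fun _ _ => rfl)
    ext b
    simp only [Finset.mem_filter]
    constructor
    · rintro ⟨hb, h6⟩
      rcases hbsize b hb with h | h
      · exact absurd h h6
      · exact ⟨hb, h⟩
    · rintro ⟨hb, h6⟩
      exact ⟨hb, by omega⟩
  have hgsum : ∑ g ∈ groups, (Tg1 g ∩ Tg2 g).card = groups.sum d :=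
    Finset.sum_congr rfl (fun g hg => (hTg g hg).2.2.2)
  rw [h5sum, hgsum]
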